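/- Let 0 < Lint < Lext and 0 < b < Lext be real numbers, and set Φ(β) := Lext + b·cos β. Let H : ℝ → ℝ and F : ℝ × ℝ → ℝ be twice continuously differentiable on an open set containing (Lint, Lext] and (Lint, Lext] × ℝ respectively, with H > 0 and F > 0 there, and suppose F(Lext, β) = Φ(β)² for all β and H(Lext) = 1. Fix ϑ ∈ [0,1]. Then, as (ℓ, β) → (Lext, π) with ℓ < Lext, the scalar Z_ϑ(ℓ,β) converges to the value −1/(b(Lext−b)) + ((1−ϑ²)/4)·[(∂ℓF(Lext,π)/(Lext−b)²)² − 2·∂ℓ²F(Lext,π)/(Lext−b)²] + (ϑ²/4)·[2H''(Lext) − H'(Lext)² + H'(Lext)·∂ℓF(Lext,π)/(Lext−b)²], where ∂ℓF(Lext,π) and ∂ℓ²F(Lext,π) denote the (one-sided) first and second partial derivatives in ℓ evaluated at (Lext, π). -/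

import Mathlib

open Real Filter Set

/-- First partial derivative of `F` with respect to its first argument `ℓ`. -/
noncomputable def pdl (F : ℝ × ℝ → ℝ) (l β : ℝ) : ℝ := deriv (fun x => F (x, β)) l

/-- Second partial derivative of `F` with respect to its first argument `ℓ`. -/
noncomputable def pdll (F : ℝ × ℝ → ℝ) (l β : ℝ) : ℝ := deriv (fun x => pdl F x β) l

/-- First partial derivative of `F` with respect to its second argument `β`. -/
noncomputable def pdb (F : ℝ × ℝ → ℝ) (l β : ℝ) : ℝ := deriv (fun y => F (l, y)) β

/-- Second partial derivative of `F` with respect to its second argument `β`. -/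
noncomputable def pdbb (F : ℝ × ℝ → ℝ) (l β : ℝ) : ℝ := deriv (fun y => pdb F l y) β

/-- The scalar `Z_ϑ = G_{ab} (A_ϑ)^a (A_ϑ)^b` for the metric
`ds² = −H dτ² + dℓ² + F dα² + b² dβ²` and `A_ϑ = H^{−1/2} ∂_τ + ϑ b^{−1} ∂_β`. -/
noncomputable def Zscalar (b : ℝ) (H : ℝ → ℝ) (F : ℝ × ℝ → ℝ) (ϑ l β : ℝ) : ℝ :=
  (1 / (4 * b ^ 2)) * ((pdb F l β / F (l, β)) ^ 2 - 2 * pdbb F l β / F (l, β))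
  + ((1 - ϑ ^ 2) / 4) * ((pdl F l β / F (l, β)) ^ 2 - 2 * pdll F l β / F (l, β))
  + (ϑ ^ 2 / 4) * (2 * deriv (deriv H) l / H l - (deriv H l / H l) ^ 2
      + (deriv H l / H l) * (pdl F l β / F (l, β)))

section Aux

/-- partial derivative in first coordinate as fderiv application -/
lemma aux_deriv_fst (G : ℝ × ℝ → ℝ) (q : ℝ × ℝ) (h : DifferentiableAt ℝ G q) :
    deriv (fun x => G (x, q.2)) q.1 = fderiv ℝ G q ((1:ℝ), (0:ℝ)) := by
  have h1 : HasDerivAt (fun x : ℝ => (x, q.2)) ((1:ℝ), (0:ℝ)) q.1 :=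
    (hasDerivAt_id q.1).prodMk (hasDerivAt_const q.1 q.2)
  exact (h.hasFDerivAt.comp_hasDerivAt_of_eq q.1 h1 (by simp)).deriv

/-- partial derivative in second coordinate as fderiv application -/
lemma aux_deriv_snd (G : ℝ × ℝ → ℝ) (q : ℝ × ℝ) (h : DifferentiableAt ℝ G q) :
    deriv (fun y => G (q.1, y)) q.2 = fderiv ℝ G q ((0:ℝ), (1:ℝ)) := by
  have h1 : HasDerivAt (fun y : ℝ => (q.1, y)) ((0:ℝ), (1:ℝ)) q.2 :=
    (hasDerivAt_const q.2 q.1).prodMk (hasDerivAt_id q.2)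
  exact (h.hasFDerivAt.comp_hasDerivAt_of_eq q.2 h1 (by simp)).deriv

end Aux

/-- Lemma 1 of the paper: asymptotic value of `Z_ϑ` as `(ℓ, β) → (Lext, π)` with `ℓ < Lext`. -/
theorem Z_tendsto_at_external_boundary
    (Lint Lext b : ℝ) (hLint : 0 < Lint) (hLL : Lint < Lext) (hb : 0 < b) (hbL : b < Lext)
    (H : ℝ → ℝ) (F : ℝ × ℝ → ℝ)
    (U : Set ℝ) (hUopen : IsOpen U) (hUsub : Set.Ioc Lint Lext ⊆ U)
    (V : Set (ℝ × ℝ)) (hVopen : IsOpen V)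
    (hVsub : Set.Ioc Lint Lext ×ˢ (Set.univ : Set ℝ) ⊆ V)
    (hH : ContDiffOn ℝ 2 H U) (hF : ContDiffOn ℝ 2 F V)
    (hHpos : ∀ x ∈ U, 0 < H x) (hFpos : ∀ p ∈ V, 0 < F p)
    (hFext : ∀ β : ℝ, F (Lext, β) = (Lext + b * Real.cos β) ^ 2)
    (hHext : H Lext = 1)
    (ϑ : ℝ) (hϑ : ϑ ∈ Set.Icc (0 : ℝ) 1) :
    Filter.Tendsto (fun p : ℝ × ℝ => Zscalar b H F ϑ p.1 p.2)
      (nhdsWithin (Lext, Real.pi) {p : ℝ × ℝ | p.1 < Lext})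
      (nhds (-(1 / (b * (Lext - b)))
        + ((1 - ϑ ^ 2) / 4) * ((pdl F Lext Real.pi / (Lext - b) ^ 2) ^ 2
            - 2 * pdll F Lext Real.pi / (Lext - b) ^ 2)
        + (ϑ ^ 2 / 4) * (2 * deriv (deriv H) Lext - (deriv H Lext) ^ 2
            + deriv H Lext * pdl F Lext Real.pi / (Lext - b) ^ 2))) := by
  have hLmem : Lext ∈ Set.Ioc Lint Lext := ⟨hLL, le_rfl⟩
  set pt : ℝ × ℝ := (Lext, Real.pi) with hptdef
  have hptV : pt ∈ V := hVsub ⟨hLmem, Set.mem_univ _⟩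
  have hVnhds : V ∈ nhds pt := hVopen.mem_nhds hptV
  have hLU : Lext ∈ U := hUsub hLmem
  have hUnhds : U ∈ nhds Lext := hUopen.mem_nhds hLU
  have hbne : Lext - b ≠ 0 := by linarith
  have hbne' : b ≠ 0 := ne_of_gt hb
  -- partial derivative functions
  set g1 : ℝ × ℝ → ℝ := fun q => fderiv ℝ F q ((1:ℝ), (0:ℝ)) with hg1def
  set g2 : ℝ × ℝ → ℝ := fun q => fderiv ℝ F q ((0:ℝ), (1:ℝ)) with hg2def
  set h1 : ℝ × ℝ → ℝ := fun q => fderiv ℝ g1 q ((1:ℝ), (0:ℝ)) with hh1def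
  set h2 : ℝ × ℝ → ℝ := fun q => fderiv ℝ g2 q ((0:ℝ), (1:ℝ)) with hh2def
  have hFdiff : ∀ q ∈ V, DifferentiableAt ℝ F q := fun q hq =>
    (hF.contDiffAt (hVopen.mem_nhds hq)).differentiableAt (by norm_num)
  have hpdl : ∀ q ∈ V, pdl F q.1 q.2 = g1 q := fun q hq =>
    aux_deriv_fst F q (hFdiff q hq)
  have hpdb : ∀ q ∈ V, pdb F q.1 q.2 = g2 q := fun q hq =>
    aux_deriv_snd F q (hFdiff q hq)
  -- fderiv F is C¹ on V
  have hfderivC1 : ContDiffOn ℝ 1 (fderiv ℝ F) V :=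
    hF.fderiv_of_isOpen hVopen (by norm_num)
  have hg1C1 : ContDiffOn ℝ 1 g1 V :=
    (ContinuousLinearMap.apply ℝ ℝ ((1:ℝ),(0:ℝ))).contDiff.comp_contDiffOn hfderivC1
  have hg2C1 : ContDiffOn ℝ 1 g2 V :=
    (ContinuousLinearMap.apply ℝ ℝ ((0:ℝ),(1:ℝ))).contDiff.comp_contDiffOn hfderivC1
  have hg1diff : ∀ q ∈ V, DifferentiableAt ℝ g1 q := fun q hq =>
    (hg1C1.contDiffAt (hVopen.mem_nhds hq)).differentiableAt one_ne_zero
  have hg2diff : ∀ q ∈ V, DifferentiableAt ℝ g2 q := fun q hq =>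
    (hg2C1.contDiffAt (hVopen.mem_nhds hq)).differentiableAt one_ne_zero
  have hpdll : ∀ q ∈ V, pdll F q.1 q.2 = h1 q := by
    intro q hq
    have hopen : IsOpen {x : ℝ | (x, q.2) ∈ V} :=
      hVopen.preimage (continuous_id.prodMk continuous_const)
    have hmem : q.1 ∈ {x : ℝ | (x, q.2) ∈ V} := by simpa using hq
    have hev : (fun x => pdl F x q.2) =ᶠ[nhds q.1] (fun x => g1 (x, q.2)) := by
      filter_upwards [hopen.mem_nhds hmem] with x hx
      exact hpdl (x, q.2) hx
    have : pdll F q.1 q.2 = deriv (fun x => g1 (x, q.2)) q.1 := hev.deriv_eq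
    rw [this]
    exact aux_deriv_fst g1 q (hg1diff q hq)
  have hpdbb : ∀ q ∈ V, pdbb F q.1 q.2 = h2 q := by
    intro q hq
    have hopen : IsOpen {y : ℝ | (q.1, y) ∈ V} :=
      hVopen.preimage (continuous_const.prodMk continuous_id)
    have hmem : q.2 ∈ {y : ℝ | (q.1, y) ∈ V} := by simpa using hq
    have hev : (fun y => pdb F q.1 y) =ᶠ[nhds q.2] (fun y => g2 (q.1, y)) := by
      filter_upwards [hopen.mem_nhds hmem] with y hy
      exact hpdb (q.1, y) hy
    have : pdbb F q.1 q.2 = deriv (fun y => g2 (q.1, y)) q.2 := hev.deriv_eq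
    rw [this]
    exact aux_deriv_snd g2 q (hg2diff q hq)
  -- continuity of the pieces at pt
  have hFc : ContinuousAt F pt := hF.continuousOn.continuousAt hVnhds
  have hfderivc : ContinuousAt (fderiv ℝ F) pt :=
    (hF.continuousOn_fderiv_of_isOpen hVopen (by norm_num)).continuousAt hVnhds
  have hg1c : ContinuousAt g1 pt :=
    ((ContinuousLinearMap.apply ℝ ℝ ((1:ℝ),(0:ℝ))).continuous.continuousAt).comp hfderivc
  have hg2c : ContinuousAt g2 pt :=
    ((ContinuousLinearMap.apply ℝ ℝ ((0:ℝ),(1:ℝ))).continuous.continuousAt).comp hfderivc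
  have hh1c : ContinuousAt h1 pt :=
    ((ContinuousLinearMap.apply ℝ ℝ ((1:ℝ),(0:ℝ))).continuous.continuousAt).comp
      ((hg1C1.continuousOn_fderiv_of_isOpen hVopen le_rfl).continuousAt hVnhds)
  have hh2c : ContinuousAt h2 pt :=
    ((ContinuousLinearMap.apply ℝ ℝ ((0:ℝ),(1:ℝ))).continuous.continuousAt).comp
      ((hg2C1.continuousOn_fderiv_of_isOpen hVopen le_rfl).continuousAt hVnhds)
  have hHc : ContinuousAt H Lext := hH.continuousOn.continuousAt hUnhds
  have hHd1 : ContDiffOn ℝ 1 (deriv H) U := hH.deriv_of_isOpen hUopen (by norm_num)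
  have hH1c : ContinuousAt (deriv H) Lext := hHd1.continuousOn.continuousAt hUnhds
  have hH2c : ContinuousAt (deriv (deriv H)) Lext :=
    (hHd1.continuousOn_deriv_of_isOpen hUopen le_rfl).continuousAt hUnhds
  have hFne : F pt ≠ 0 := ne_of_gt (hFpos pt hptV)
  have hHne : H Lext ≠ 0 := ne_of_gt (hHpos Lext hLU)
  -- the continuous model function
  set E : ℝ × ℝ → ℝ := fun p =>
    (1 / (4 * b ^ 2)) * ((g2 p / F p) ^ 2 - 2 * h2 p / F p)
    + ((1 - ϑ ^ 2) / 4) * ((g1 p / F p) ^ 2 - 2 * h1 p / F p)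
    + (ϑ ^ 2 / 4) * (2 * deriv (deriv H) p.1 / H p.1 - (deriv H p.1 / H p.1) ^ 2
        + (deriv H p.1 / H p.1) * (g1 p / F p)) with hEdef
  have hHcc : ContinuousAt (fun p : ℝ × ℝ => H p.1) pt := hHc.comp continuousAt_fst
  have hH1cc : ContinuousAt (fun p : ℝ × ℝ => deriv H p.1) pt :=
    (show ContinuousAt (deriv H ∘ Prod.fst) pt from hH1c.comp continuousAt_fst)
  have hH2cc : ContinuousAt (fun p : ℝ × ℝ => deriv (deriv H) p.1) pt :=
    (show ContinuousAt (deriv (deriv H) ∘ Prod.fst) pt from hH2c.comp continuousAt_fst)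
  have hHnec : H pt.1 ≠ 0 := hHne
  have hEcont : ContinuousAt E pt := by
    apply ContinuousAt.add
    apply ContinuousAt.add
    · exact (continuousAt_const.mul (((hg2c.div hFc hFne).pow 2).sub
        ((continuousAt_const.mul hh2c).div hFc hFne)))
    · exact (continuousAt_const.mul (((hg1c.div hFc hFne).pow 2).sub
        ((continuousAt_const.mul hh1c).div hFc hFne)))
    · exact (continuousAt_const.mul ((((continuousAt_const.mul hH2cc).div hHcc hHnec).sub
        ((hH1cc.div hHcc hHnec).pow 2)).add
        ((hH1cc.div hHcc hHnec).mul (hg1c.div hFc hFne))))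
  have hEq : (fun p : ℝ × ℝ => Zscalar b H F ϑ p.1 p.2) =ᶠ[nhds pt] E := by
    filter_upwards [hVnhds] with q hq
    simp only [Zscalar, hEdef, hpdl q hq, hpdb q hq, hpdll q hq, hpdbb q hq, Prod.mk.eta]
  have hZcont : ContinuousAt (fun p : ℝ × ℝ => Zscalar b H F ϑ p.1 p.2) pt :=
    hEcont.congr hEq.symm
  have htend := hZcont.tendsto.mono_left (nhdsWithin_le_nhds
    (s := {p : ℝ × ℝ | p.1 < Lext}))
  -- compute the value at pt
  have hFpt : F (Lext, Real.pi) = (Lext - b) ^ 2 := by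
    rw [hFext]; rw [Real.cos_pi]; ring
  have hpdbval : ∀ y, pdb F Lext y = 2 * (Lext + b * Real.cos y) * (-(b * Real.sin y)) := by
    intro y
    have hinner : HasDerivAt (fun y => Lext + b * Real.cos y) (-(b * Real.sin y)) y := by
      simpa [mul_comm] using ((Real.hasDerivAt_cos y).const_mul b).const_add Lext
    have hsq : HasDerivAt (fun y => (Lext + b * Real.cos y) ^ 2)
        (2 * (Lext + b * Real.cos y) * (-(b * Real.sin y))) y := by
      simpa using hinner.fun_pow 2
    have : pdb F Lext y = deriv (fun y => (Lext + b * Real.cos y) ^ 2) y := by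
      unfold pdb; congr 1; funext t; exact hFext t
    rw [this, hsq.deriv]
  have hpdbpt : pdb F Lext Real.pi = 0 := by
    rw [hpdbval]; simp [Real.sin_pi]
  have hpdbbpt : pdbb F Lext Real.pi = 2 * b * (Lext - b) := by
    unfold pdbb
    have heq : (fun y => pdb F Lext y)
        = fun y => 2 * (Lext + b * Real.cos y) * (-(b * Real.sin y)) := funext hpdbval
    rw [heq]
    have ha : HasDerivAt (fun y => 2 * (Lext + b * Real.cos y)) (2 * (-(b * Real.sin Real.pi)))
        Real.pi := by
      have hinner : HasDerivAt (fun y => Lext + b * Real.cos y) (-(b * Real.sin Real.pi))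
          Real.pi := by
        simpa [mul_comm] using ((Real.hasDerivAt_cos Real.pi).const_mul b).const_add Lext
      simpa [mul_comm] using hinner.const_mul 2
    have hbder : HasDerivAt (fun y => -(b * Real.sin y)) (-(b * Real.cos Real.pi)) Real.pi := by
      simpa [mul_comm] using (((Real.hasDerivAt_sin Real.pi).const_mul b).fun_neg)
    rw [(ha.fun_mul hbder).deriv]
    simp [Real.sin_pi, Real.cos_pi]
    ring
  have hval : Zscalar b H F ϑ Lext Real.pi
      = -(1 / (b * (Lext - b)))
        + ((1 - ϑ ^ 2) / 4) * ((pdl F Lext Real.pi / (Lext - b) ^ 2) ^ 2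
            - 2 * pdll F Lext Real.pi / (Lext - b) ^ 2)
        + (ϑ ^ 2 / 4) * (2 * deriv (deriv H) Lext - (deriv H Lext) ^ 2
            + deriv H Lext * pdl F Lext Real.pi / (Lext - b) ^ 2) := by
    unfold Zscalar
    rw [hFpt, hHext, hpdbpt, hpdbbpt]
    field_simp
    ring
  rw [← hval]
  exact htend
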